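/- Let {μ_n} and μ be generalised signed Radon measures on [0,∞) whose variations have finite Laplace transforms on (0,∞), with limsup_n ∫ e^{−λx} |μ_n|(dx) < ∞ for all λ > 0. If the distribution functions F_{μ_n} converge to F_μ at almost every point of (0,∞), then Ψ_{μ_n}(λ) → Ψ_μ(λ) for every λ > 0. -/

import Mathlib

open MeasureTheory Filter Topology Set
open scoped NNReal ENNReal

lemma aux_integral_exp (c l : ℝ) (hl : 0 < l) :
    ∫ x in Ioi c, l * Real.exp (-(l * x)) = Real.exp (-(l * c)) := by
  have hderiv : ∀ x ∈ Ici c, HasDerivAt (fun y => -Real.exp (-(l * y)))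
      (l * Real.exp (-(l * x))) x := by
    intro x _
    have h := (((hasDerivAt_id x).const_mul l).neg.exp).neg
    simp only [id_eq, mul_one, Pi.neg_def] at h
    refine h.congr_deriv ?_
    ring
  have hint : IntegrableOn (fun x => l * Real.exp (-(l * x))) (Ioi c) := by
    have := (exp_neg_integrableOn_Ioi c hl).const_mul l
    simp only [neg_mul] at this
    exact this
  have htend : Tendsto (fun y => -Real.exp (-(l * y))) atTop (𝓝 0) := by
    rw [show (0:ℝ) = -0 by ring]
    refine Tendsto.neg ?_
    have h1 : Tendsto (fun y : ℝ => -(l * y)) atTop atBot := by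
      have hneg : (-l) < 0 := by linarith
      have := tendsto_id.const_mul_atTop_of_neg hneg
      refine this.congr fun x => by simp only [id_eq]; ring
    exact Real.tendsto_exp_atBot.comp h1
  have := integral_Ioi_of_hasDerivAt_of_tendsto' hderiv hint htend
  rw [this]; ring

lemma aux_lintegral_exp (c l : ℝ) (hl : 0 < l) :
    ∫⁻ x in Ioi c, ENNReal.ofReal (l * Real.exp (-(l * x))) = ENNReal.ofReal (Real.exp (-(l * c))) := by
  rw [← aux_integral_exp c l hl, ← ofReal_integral_eq_lintegral_ofReal]
  · have := (exp_neg_integrableOn_Ioi c hl).const_mul l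
    simpa [neg_mul] using this
  · exact Eventually.of_forall fun x => by positivity

lemma aux_meas_F (μ : Measure ℝ≥0) : Measurable (fun x : ℝ => μ (Iic x.toNNReal)) := by
  have h1 : Monotone (fun y : ℝ≥0 => μ (Iic y)) := fun a b hab => measure_mono (Iic_subset_Iic.2 hab)
  exact h1.measurable.comp measurable_real_toNNReal

lemma aux_meas_le (μ : Measure ℝ≥0) {l : ℝ} (hl : 0 < l) {x : ℝ} (hx : 0 ≤ x) :
    μ (Iic x.toNNReal) ≤ ENNReal.ofReal (Real.exp (l * x)) *
      ∫⁻ t, ENNReal.ofReal (Real.exp (-(l * (t : ℝ)))) ∂μ := by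
  have key : ENNReal.ofReal (Real.exp (-(l * x))) * μ (Iic x.toNNReal) ≤
      ∫⁻ t, ENNReal.ofReal (Real.exp (-(l * (t : ℝ)))) ∂μ := by
    have h1 : ∫⁻ t in Iic x.toNNReal, ENNReal.ofReal (Real.exp (-(l * x))) ∂μ ≤
        ∫⁻ t in Iic x.toNNReal, ENNReal.ofReal (Real.exp (-(l * (t : ℝ)))) ∂μ := by
      refine setLIntegral_mono_ae (by fun_prop) (Eventually.of_forall fun t ht => ?_)
      refine ENNReal.ofReal_le_ofReal (Real.exp_le_exp.2 ?_)
      have : (t : ℝ) ≤ x := le_trans (NNReal.coe_le_coe.2 ht) (Real.coe_toNNReal x hx).le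
      nlinarith
    calc ENNReal.ofReal (Real.exp (-(l * x))) * μ (Iic x.toNNReal)
        = ∫⁻ _ in Iic x.toNNReal, ENNReal.ofReal (Real.exp (-(l * x))) ∂μ := by
          rw [setLIntegral_const]
      _ ≤ ∫⁻ t in Iic x.toNNReal, ENNReal.ofReal (Real.exp (-(l * (t : ℝ)))) ∂μ := h1
      _ ≤ _ := setLIntegral_le_lintegral _ _
  calc μ (Iic x.toNNReal)
      = (ENNReal.ofReal (Real.exp (l * x)) * ENNReal.ofReal (Real.exp (-(l * x)))) *
        μ (Iic x.toNNReal) := by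
        rw [← ENNReal.ofReal_mul (Real.exp_pos _).le, ← Real.exp_add]
        norm_num
    _ = ENNReal.ofReal (Real.exp (l * x)) *
        (ENNReal.ofReal (Real.exp (-(l * x))) * μ (Iic x.toNNReal)) := by ring
    _ ≤ _ := mul_le_mul_right key _

lemma aux_meas_ne_top (μ : Measure ℝ≥0) {l : ℝ} (hl : 0 < l)
    (hfin : (∫⁻ t, ENNReal.ofReal (Real.exp (-(l * (t : ℝ)))) ∂μ) ≠ ⊤) (y : ℝ≥0) :
    μ (Iic y) ≠ ⊤ := by
  have := aux_meas_le μ hl (x := (y : ℝ)) y.coe_nonneg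
  rw [Real.toNNReal_coe] at this
  exact ne_top_of_le_ne_top (ENNReal.mul_ne_top ENNReal.ofReal_ne_top hfin) this

lemma aux_fubini (μ : Measure ℝ≥0) [SigmaFinite μ] {l : ℝ} (hl : 0 < l) :
    ∫⁻ t, ENNReal.ofReal (Real.exp (-(l * (t : ℝ)))) ∂μ
      = ∫⁻ x in Ioi (0:ℝ), ENNReal.ofReal (l * Real.exp (-(l * x))) * μ (Iic x.toNNReal) := by
  set g : ℝ → ℝ≥0∞ := fun x => ENNReal.ofReal (l * Real.exp (-(l * x))) with hg
  have hgmeas : Measurable g := by fun_prop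
  set F : ℝ≥0 → ℝ → ℝ≥0∞ := fun t x => if (t : ℝ) ≤ x then g x else 0 with hF
  have hFmeas : Measurable (Function.uncurry F) := by
    have hset : MeasurableSet {p : ℝ≥0 × ℝ | (p.1 : ℝ) ≤ p.2} :=
      measurableSet_le (by fun_prop) measurable_snd
    exact Measurable.ite hset (hgmeas.comp measurable_snd) measurable_const
  have key : ∀ t : ℝ≥0, ENNReal.ofReal (Real.exp (-(l * (t : ℝ))))
      = ∫⁻ x in Ioi (0:ℝ), F t x := by
    intro t
    have h1 : ∫⁻ x in Ioi (0:ℝ), F t x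
        = ∫⁻ x in Ici (t : ℝ) ∩ Ioi (0:ℝ), g x := by
      have : (fun x => F t x) = (Ici (t:ℝ)).indicator g := by
        ext x; simp [hF, Set.indicator_apply, Ici]
      rw [this, lintegral_indicator measurableSet_Ici, Measure.restrict_restrict measurableSet_Ici]
    have h2 : (Ici (t : ℝ) ∩ Ioi (0:ℝ) : Set ℝ) =ᵐ[volume] Ioi (t : ℝ) := by
      have hne : ∀ᵐ x : ℝ, x ≠ (t : ℝ) := by
        rw [ae_iff]
        simpa using measure_singleton (α := ℝ) (t : ℝ)
      rw [Filter.eventuallyEq_set]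
      filter_upwards [hne] with x hx
      constructor
      · rintro ⟨hx1, _⟩
        exact lt_of_le_of_ne hx1 (Ne.symm hx)
      · intro hx1
        exact ⟨mem_Ici.2 (le_of_lt hx1), lt_of_le_of_lt t.coe_nonneg hx1⟩
    rw [h1, setLIntegral_congr h2, aux_lintegral_exp _ l hl]
  calc ∫⁻ t, ENNReal.ofReal (Real.exp (-(l * (t : ℝ)))) ∂μ
      = ∫⁻ t, (∫⁻ x in Ioi (0:ℝ), F t x) ∂μ := by
        exact lintegral_congr key
    _ = ∫⁻ x in Ioi (0:ℝ), ∫⁻ t, F t x ∂μ := by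
        exact lintegral_lintegral_swap hFmeas.aemeasurable
    _ = ∫⁻ x in Ioi (0:ℝ), g x * μ (Iic x.toNNReal) := by
        refine setLIntegral_congr_fun measurableSet_Ioi (fun x hx => ?_)
        have hset : {t : ℝ≥0 | (t : ℝ) ≤ x} = Iic x.toNNReal := by
          ext t
          simp [Real.le_toNNReal_iff_coe_le (le_of_lt hx)]
        have : (fun t : ℝ≥0 => F t x) = Set.indicator {t : ℝ≥0 | (t:ℝ) ≤ x} (fun _ => g x) := by
          ext t; simp [hF, Set.indicator_apply]
        rw [this, lintegral_indicator_const (by rw [hset]; exact measurableSet_Iic), hset]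

lemma aux_lhs_eq (μ : Measure ℝ≥0) {l : ℝ} (hl : 0 < l) :
    ∫ t, Real.exp (-(l * (t : ℝ))) ∂μ
      = (∫⁻ t, ENNReal.ofReal (Real.exp (-(l * (t : ℝ)))) ∂μ).toReal := by
  rw [integral_eq_lintegral_of_nonneg_ae (Eventually.of_forall fun t => (Real.exp_pos _).le)]
  exact (Continuous.aestronglyMeasurable (by fun_prop))

lemma aux_congr_ofReal (μ : Measure ℝ≥0) {l : ℝ} (hl : 0 < l)
    (hfin : (∫⁻ t, ENNReal.ofReal (Real.exp (-(l * (t : ℝ)))) ∂μ) ≠ ⊤) (x : ℝ) :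
    ENNReal.ofReal (l * Real.exp (-(l * x)) * (μ (Iic x.toNNReal)).toReal)
      = ENNReal.ofReal (l * Real.exp (-(l * x))) * μ (Iic x.toNNReal) := by
  rw [ENNReal.ofReal_mul (by positivity),
    ENNReal.ofReal_toReal (aux_meas_ne_top μ hl hfin _)]

lemma aux_rhs_eq (μ : Measure ℝ≥0) {l : ℝ} (hl : 0 < l)
    (hfin : (∫⁻ t, ENNReal.ofReal (Real.exp (-(l * (t : ℝ)))) ∂μ) ≠ ⊤) :
    ∫ x in Ioi (0:ℝ), l * Real.exp (-(l * x)) * (μ (Iic x.toNNReal)).toReal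
      = (∫⁻ x in Ioi (0:ℝ), ENNReal.ofReal (l * Real.exp (-(l * x))) * μ (Iic x.toNNReal)).toReal := by
  rw [integral_eq_lintegral_of_nonneg_ae
    (Eventually.of_forall fun x => by positivity)
    (Measurable.aestronglyMeasurable (by
      exact ((measurable_const.mul (by fun_prop)).mul (aux_meas_F μ).ennreal_toReal)))]
  congr 1
  exact lintegral_congr fun x => aux_congr_ofReal μ hl hfin x

lemma aux_integrable (μ : Measure ℝ≥0) [SigmaFinite μ] {l : ℝ} (hl : 0 < l)
    (hfin : (∫⁻ t, ENNReal.ofReal (Real.exp (-(l * (t : ℝ)))) ∂μ) ≠ ⊤) :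
    IntegrableOn (fun x => l * Real.exp (-(l * x)) * (μ (Iic x.toNNReal)).toReal) (Ioi (0:ℝ)) := by
  constructor
  · exact (Measurable.aestronglyMeasurable
      ((measurable_const.mul (by fun_prop)).mul (aux_meas_F μ).ennreal_toReal))
  · rw [hasFiniteIntegral_iff_ofReal (Eventually.of_forall fun x => by positivity)]
    have := lintegral_congr (μ := volume.restrict (Ioi (0:ℝ))) (aux_congr_ofReal μ hl hfin)
    rw [this, ← aux_fubini μ hl]
    exact lt_top_iff_ne_top.2 hfin

lemma aux_psi_eq (μ : Measure ℝ≥0) [SigmaFinite μ] {l : ℝ} (hl : 0 < l)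
    (hfin : (∫⁻ t, ENNReal.ofReal (Real.exp (-(l * (t : ℝ)))) ∂μ) ≠ ⊤) :
    ∫ t, Real.exp (-(l * (t : ℝ))) ∂μ
      = ∫ x in Ioi (0:ℝ), l * Real.exp (-(l * x)) * (μ (Iic x.toNNReal)).toReal := by
  rw [aux_lhs_eq μ hl, aux_rhs_eq μ hl hfin, aux_fubini μ hl]

/-- Continuity theorem, part (b). Let `μ_n = p n - q n` and `μ = P - Q` be
generalised signed Radon measures on `[0,∞)` whose variations have finite Laplace
transforms on `(0,∞)`, with `limsup_n ∫ e^{-λx} |μ_n|(dx) < ∞` for all `λ > 0`. If the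
distribution functions `F_{μ_n}` converge to `F_μ` at (Lebesgue) almost every point of
`(0,∞)`, then `Ψ_{μ_n}(λ) → Ψ_μ(λ)` for every `λ > 0`. -/
theorem continuity_theorem_part_b (p q : ℕ → Measure ℝ≥0) (P Q : Measure ℝ≥0)
    (hsing : ∀ n, (p n).MutuallySingular (q n)) (hsingμ : P.MutuallySingular Q)
    (hRadon : ∀ n, (IsLocallyFiniteMeasure (p n) ∧ (p n).InnerRegular) ∧
      (IsLocallyFiniteMeasure (q n) ∧ (q n).InnerRegular))
    (hRadonμ : (IsLocallyFiniteMeasure P ∧ P.InnerRegular) ∧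
      (IsLocallyFiniteMeasure Q ∧ Q.InnerRegular))
    (hfin : ∀ n, ∀ l : ℝ, 0 < l →
      (∫⁻ x, ENNReal.ofReal (Real.exp (-(l * (x : ℝ)))) ∂(p n + q n)) ≠ ⊤)
    (hfinμ : ∀ l : ℝ, 0 < l →
      (∫⁻ x, ENNReal.ofReal (Real.exp (-(l * (x : ℝ)))) ∂(P + Q)) ≠ ⊤)
    (hbdd : ∀ l : ℝ, 0 < l →
      Filter.limsup
        (fun n => ∫⁻ x, ENNReal.ofReal (Real.exp (-(l * (x : ℝ)))) ∂(p n + q n)) atTop < ⊤)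
    (hFconv : ∀ᵐ (x : ℝ) ∂(volume.restrict (Set.Ioi (0 : ℝ))),
      Tendsto (fun n =>
          ((p n) (Set.Iic x.toNNReal)).toReal - ((q n) (Set.Iic x.toNNReal)).toReal)
        atTop
        (𝓝 ((P (Set.Iic x.toNNReal)).toReal - (Q (Set.Iic x.toNNReal)).toReal))) :
    ∀ l : ℝ, 0 < l →
      Tendsto (fun n =>
          (∫ x, Real.exp (-(l * (x : ℝ))) ∂(p n)) - ∫ x, Real.exp (-(l * (x : ℝ))) ∂(q n))
        atTop
        (𝓝 ((∫ x, Real.exp (-(l * (x : ℝ))) ∂P) - ∫ x, Real.exp (-(l * (x : ℝ))) ∂Q)) := by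
  intro l hl
  -- sigma-finiteness
  have sfp : ∀ n, SigmaFinite (p n) := fun n => by
    haveI := (hRadon n).1.1; infer_instance
  have sfq : ∀ n, SigmaFinite (q n) := fun n => by
    haveI := (hRadon n).2.1; infer_instance
  haveI sfP : SigmaFinite P := by haveI := hRadonμ.1.1; infer_instance
  haveI sfQ : SigmaFinite Q := by haveI := hRadonμ.2.1; infer_instance
  -- finiteness of individual Laplace transforms at rate l
  have hsplit : ∀ n, ∀ l' : ℝ, 0 < l' →
      (∫⁻ x, ENNReal.ofReal (Real.exp (-(l' * (x : ℝ)))) ∂(p n)) ≠ ⊤ ∧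
      (∫⁻ x, ENNReal.ofReal (Real.exp (-(l' * (x : ℝ)))) ∂(q n)) ≠ ⊤ := by
    intro n l' hl'
    have := hfin n l' hl'
    rw [lintegral_add_measure] at this
    exact ⟨(ENNReal.add_ne_top.1 this).1, (ENNReal.add_ne_top.1 this).2⟩
  have hsplitμ :
      (∫⁻ x, ENNReal.ofReal (Real.exp (-(l * (x : ℝ)))) ∂P) ≠ ⊤ ∧
      (∫⁻ x, ENNReal.ofReal (Real.exp (-(l * (x : ℝ)))) ∂Q) ≠ ⊤ := by
    have := hfinμ l hl
    rw [lintegral_add_measure] at this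
    exact ⟨(ENNReal.add_ne_top.1 this).1, (ENNReal.add_ne_top.1 this).2⟩
  -- uniform bound on Laplace transforms at rate l/2
  have hl2 : (0:ℝ) < l / 2 := by linarith
  set I : ℕ → ℝ≥0∞ :=
    fun n => ∫⁻ x, ENNReal.ofReal (Real.exp (-((l/2) * (x : ℝ)))) ∂(p n + q n) with hI
  obtain ⟨N, hN⟩ : ∃ N, ∀ n ≥ N, I n ≤ limsup I atTop + 1 := by
    have hlt : limsup I atTop < limsup I atTop + 1 :=
      ENNReal.lt_add_right (hbdd (l/2) hl2).ne one_ne_zero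
    have := eventually_lt_of_limsup_lt hlt
    rw [eventually_atTop] at this
    obtain ⟨N, hN⟩ := this
    exact ⟨N, fun n hn => (hN n hn).le⟩
  set C : ℝ≥0∞ := (limsup I atTop + 1) + ∑ k ∈ Finset.range N, I k with hCdef
  have hCtop : C ≠ ⊤ := by
    refine ENNReal.add_ne_top.2 ⟨?_, ?_⟩
    · exact ENNReal.add_ne_top.2 ⟨(hbdd (l/2) hl2).ne, ENNReal.one_ne_top⟩
    · exact (ENNReal.sum_lt_top.2 fun k _ => (hfin k (l/2) hl2).lt_top).ne
  have hC : ∀ n, I n ≤ C := by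
    intro n
    rcases le_or_gt N n with h | h
    · exact (hN n h).trans le_self_add
    · refine le_trans ?_ le_add_self
      exact Finset.single_le_sum (f := I) (fun k _ => zero_le) (Finset.mem_range.2 h)
  -- the functions under the integral sign
  set G : ℕ → ℝ → ℝ := fun n x => l * Real.exp (-(l * x)) *
    (((p n) (Iic x.toNNReal)).toReal - ((q n) (Iic x.toNNReal)).toReal) with hG
  set g : ℝ → ℝ := fun x => l * Real.exp (-(l * x)) *
    ((P (Iic x.toNNReal)).toReal - (Q (Iic x.toNNReal)).toReal) with hg
  have hLHS : ∀ n, (∫ x, Real.exp (-(l * (x : ℝ))) ∂(p n)) - (∫ x, Real.exp (-(l * (x : ℝ))) ∂(q n))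
      = ∫ x in Ioi (0:ℝ), G n x := by
    intro n
    haveI := sfp n; haveI := sfq n
    rw [aux_psi_eq (p n) hl (hsplit n l hl).1, aux_psi_eq (q n) hl (hsplit n l hl).2,
      ← integral_sub (aux_integrable (p n) hl (hsplit n l hl).1)
        (aux_integrable (q n) hl (hsplit n l hl).2)]
    refine integral_congr_ae (Eventually.of_forall fun x => ?_)
    simp only [hG]; ring
  have hRHS : (∫ x, Real.exp (-(l * (x : ℝ))) ∂P) - (∫ x, Real.exp (-(l * (x : ℝ))) ∂Q)
      = ∫ x in Ioi (0:ℝ), g x := by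
    rw [aux_psi_eq P hl hsplitμ.1, aux_psi_eq Q hl hsplitμ.2,
      ← integral_sub (aux_integrable P hl hsplitμ.1) (aux_integrable Q hl hsplitμ.2)]
    refine integral_congr_ae (Eventually.of_forall fun x => ?_)
    simp only [hg]; ring
  -- dominated convergence
  have hmain : Tendsto (fun n => ∫ x in Ioi (0:ℝ), G n x) atTop
      (𝓝 (∫ x in Ioi (0:ℝ), g x)) := by
    refine tendsto_integral_of_dominated_convergence
      (fun x => l * C.toReal * Real.exp (-(l/2) * x)) ?_ ?_ ?_ ?_
    · intro n
      refine Measurable.aestronglyMeasurable ?_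
      exact (measurable_const.mul (by fun_prop)).mul
        ((aux_meas_F (p n)).ennreal_toReal.sub (aux_meas_F (q n)).ennreal_toReal)
    · exact (exp_neg_integrableOn_Ioi 0 hl2).const_mul (l * C.toReal)
    · intro n
      rw [ae_restrict_iff' measurableSet_Ioi]
      refine Eventually.of_forall fun x hx => ?_
      have hx0 : (0:ℝ) ≤ x := le_of_lt hx
      have h1 : ((p n) (Iic x.toNNReal)).toReal + ((q n) (Iic x.toNNReal)).toReal
          = ((p n + q n) (Iic x.toNNReal)).toReal := by
        rw [Measure.add_apply, ENNReal.toReal_add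
          (aux_meas_ne_top (p n) hl (hsplit n l hl).1 _)
          (aux_meas_ne_top (q n) hl (hsplit n l hl).2 _)]
      have h2 : ((p n + q n) (Iic x.toNNReal)).toReal
          ≤ Real.exp ((l/2) * x) * C.toReal := by
        have hle : (p n + q n) (Iic x.toNNReal)
            ≤ ENNReal.ofReal (Real.exp ((l/2) * x)) * C := by
          refine (aux_meas_le (p n + q n) hl2 hx0).trans ?_
          exact mul_le_mul_right (hC n) _
        have := ENNReal.toReal_mono (ENNReal.mul_ne_top ENNReal.ofReal_ne_top hCtop) hle
        rwa [ENNReal.toReal_mul, ENNReal.toReal_ofReal (Real.exp_pos _).le] at this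
      have h3 : |((p n) (Iic x.toNNReal)).toReal - ((q n) (Iic x.toNNReal)).toReal|
          ≤ Real.exp ((l/2) * x) * C.toReal := by
        refine le_trans (abs_sub _ _) ?_
        rw [abs_of_nonneg ENNReal.toReal_nonneg, abs_of_nonneg ENNReal.toReal_nonneg, h1]
        exact h2
      have hexp : Real.exp (-(l * x)) * Real.exp ((l/2) * x) = Real.exp (-(l/2) * x) := by
        rw [← Real.exp_add]; ring_nf
      calc ‖G n x‖ = l * Real.exp (-(l * x)) *
            |((p n) (Iic x.toNNReal)).toReal - ((q n) (Iic x.toNNReal)).toReal| := by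
            rw [hG, Real.norm_eq_abs, abs_mul, abs_of_nonneg (by positivity)]
        _ ≤ l * Real.exp (-(l * x)) * (Real.exp ((l/2) * x) * C.toReal) := by
            refine mul_le_mul_of_nonneg_left h3 (by positivity)
        _ = l * C.toReal * Real.exp (-(l/2) * x) := by
            rw [← hexp]; ring
    · filter_upwards [hFconv] with x hx
      exact hx.const_mul (l * Real.exp (-(l * x)))
  rw [hRHS]
  exact hmain.congr fun n => (hLHS n).symm
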